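/- Let Ω ⊂ ℝ^m be a bounded domain with smooth boundary, W ∈ C¹((−∞,1],ℝ) satisfy W(0)=0, W(t)>0 for all t ∈ (−∞,1]\{0}, and W strictly convex, ε > 0, and let u ∈ H¹ ∩ L^∞(Ω; ℝⁿ) be a critical point of E_ε in 𝒜, i.e. ∫_Ω [∇u · ∇v − (1/ε²) W'(1 − |u|²) u · v] dx = 0 for all v ∈ H¹₀(Ω; ℝⁿ). Then for every v ∈ H¹₀(Ω; ℝⁿ), E_ε(u + v) − E_ε(u) ≥ F(v) := ∫_Ω [½ |∇v|² − (1/(2ε²)) W'(1 − |u|²) |v|²] dx, with equality if and only if |u(x) + v(x)| = |u(x)| for a.e. x ∈ Ω. -/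

import Mathlib

open MeasureTheory Set Bornology

noncomputable section

/-- Euclidean dot product on `Fin n → ℝ`. -/
def dotR {n : ℕ} (a b : Fin n → ℝ) : ℝ := ∑ j, a j * b j

/-- Squared Euclidean norm on `Fin n → ℝ`. -/
def normSq {n : ℕ} (a : Fin n → ℝ) : ℝ := ∑ j, a j ^ 2

/-- Pointwise (Frobenius) inner product of gradients `∇u · ∇v`. -/
def gradDot {m n : ℕ} (u v : (Fin m → ℝ) → Fin n → ℝ) (x : Fin m → ℝ) : ℝ :=
  ∑ i, ∑ j, fderiv ℝ u x (Pi.single i (1:ℝ)) j * fderiv ℝ v x (Pi.single i (1:ℝ)) j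

/-- `|∇u|²`. -/
def gradSq {m n : ℕ} (u : (Fin m → ℝ) → Fin n → ℝ) (x : Fin m → ℝ) : ℝ := gradDot u u x

/-- Scalar version of `gradDot`. -/
def gradDotS {m : ℕ} (φ ψ : (Fin m → ℝ) → ℝ) (x : Fin m → ℝ) : ℝ :=
  ∑ i, fderiv ℝ φ x (Pi.single i (1:ℝ)) * fderiv ℝ ψ x (Pi.single i (1:ℝ))

/-- `|∇φ|²` for scalar `φ`. -/
def gradSqS {m : ℕ} (φ : (Fin m → ℝ) → ℝ) (x : Fin m → ℝ) : ℝ := gradDotS φ φ x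

/-- `W'`, the (one-sided) derivative of the potential on `(-∞, 1]`. -/
def Wd (W : ℝ → ℝ) : ℝ → ℝ := derivWithin W (Iic (1:ℝ))

/-- The Ginzburg–Landau energy `E_ε`. -/
def GLenergy {m n : ℕ} (W : ℝ → ℝ) (ε : ℝ) (Ω : Set (Fin m → ℝ))
    (u : (Fin m → ℝ) → Fin n → ℝ) : ℝ :=
  ∫ x in Ω, (gradSq u x / 2 + W (1 - normSq (u x)) / (2 * ε ^ 2))

/-- The admissible class `𝒜`: `H¹` maps attaining the boundary data `ubd` on `∂Ω`. -/
def Admissible {m n : ℕ} (Ω : Set (Fin m → ℝ)) (ubd u : (Fin m → ℝ) → Fin n → ℝ) : Prop :=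
  ContDiffOn ℝ 1 u Ω ∧ ContinuousOn u (closure Ω) ∧
  IntegrableOn (gradSq u) Ω ∧ IntegrableOn (fun x => normSq (u x)) Ω ∧
  EqOn u ubd (frontier Ω)

/-- `H¹₀(Ω; ℝⁿ)`. -/
def H10 {m n : ℕ} (Ω : Set (Fin m → ℝ)) (v : (Fin m → ℝ) → Fin n → ℝ) : Prop :=
  ContDiffOn ℝ 1 v Ω ∧ ContinuousOn v (closure Ω) ∧
  IntegrableOn (gradSq v) Ω ∧ IntegrableOn (fun x => normSq (v x)) Ω ∧
  EqOn v 0 (frontier Ω)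

/-- `H¹₀(Ω; ℝ)`. -/
def H10S {m : ℕ} (Ω : Set (Fin m → ℝ)) (φ : (Fin m → ℝ) → ℝ) : Prop :=
  ContDiffOn ℝ 1 φ Ω ∧ ContinuousOn φ (closure Ω) ∧
  IntegrableOn (gradSqS φ) Ω ∧ IntegrableOn (fun x => φ x ^ 2) Ω ∧
  EqOn φ 0 (frontier Ω)

/-- Critical point of `E_ε`: weak solution of `-Δu = ε⁻² u W'(1-|u|²)` in `Ω`. -/
def IsCritical {m n : ℕ} (W : ℝ → ℝ) (ε : ℝ) (Ω : Set (Fin m → ℝ))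
    (u : (Fin m → ℝ) → Fin n → ℝ) : Prop :=
  ∀ v, H10 Ω v →
    (∫ x in Ω, (gradDot u v x - 1 / ε ^ 2 * Wd W (1 - normSq (u x)) * dotR (u x) (v x))) = 0

/-- Minimiser of `E_ε` over `𝒜`. -/
def IsMinimiser {m n : ℕ} (W : ℝ → ℝ) (ε : ℝ) (Ω : Set (Fin m → ℝ))
    (ubd u : (Fin m → ℝ) → Fin n → ℝ) : Prop :=
  Admissible Ω ubd u ∧ ∀ v, Admissible Ω ubd v → GLenergy W ε Ω u ≤ GLenergy W ε Ω v

/-- Orthogonal transformation of `ℝⁿ` (element of `O(n)`). -/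
def IsOrth {n : ℕ} (R : (Fin n → ℝ) →ₗ[ℝ] (Fin n → ℝ)) : Prop :=
  Function.Bijective R ∧ ∀ a b, dotR (R a) (R b) = dotR a b



lemma key_convex {W : ℝ → ℝ} (hW : ContDiffOn ℝ 1 W (Iic (1:ℝ)))
    (hWconv : StrictConvexOn ℝ (Iic (1:ℝ)) W) {s t : ℝ} (hs : s ∈ Iic (1:ℝ))
    (ht : t ∈ Iic (1:ℝ)) (hst : t ≠ s) :
    0 < W t - W s - Wd W s * (t - s) := by
  have hd : DifferentiableWithinAt ℝ W (Iic 1) s := (hW.differentiableOn one_ne_zero) s hs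
  rcases hst.lt_or_gt with h | h
  · have h2 := hWconv.slope_lt_derivWithin ht hs h hd
    rw [slope_def_field] at h2
    have h3 : 0 < s - t := by linarith
    rw [div_lt_iff₀ h3] at h2
    unfold Wd
    nlinarith
  · have h2 := hWconv.derivWithin_lt_slope hs ht h hd
    rw [slope_def_field] at h2
    have h3 : 0 < t - s := by linarith
    rw [lt_div_iff₀ h3] at h2
    unfold Wd
    nlinarith

lemma key_convex_le {W : ℝ → ℝ} (hW : ContDiffOn ℝ 1 W (Iic (1:ℝ)))
    (hWconv : StrictConvexOn ℝ (Iic (1:ℝ)) W) {s t : ℝ} (hs : s ∈ Iic (1:ℝ))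
    (ht : t ∈ Iic (1:ℝ)) :
    0 ≤ W t - W s - Wd W s * (t - s) := by
  rcases eq_or_ne t s with rfl | h
  · simp
  · exact (key_convex hW hWconv hs ht h).le

lemma normSq_nonneg {n : ℕ} (a : Fin n → ℝ) : 0 ≤ normSq a :=
  Finset.sum_nonneg fun j _ => sq_nonneg _

lemma normSq_le {n : ℕ} (a : Fin n → ℝ) : normSq a ≤ (n:ℝ) * ‖a‖ ^ 2 := by
  unfold normSq
  calc ∑ j, a j ^ 2 ≤ ∑ _j : Fin n, ‖a‖ ^ 2 := by
        refine Finset.sum_le_sum fun j _ => ?_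
        have := norm_le_pi_norm a j
        have h0 : (0:ℝ) ≤ |a j| := abs_nonneg _
        rw [Real.norm_eq_abs] at this
        nlinarith [sq_abs (a j)]
    _ = (n:ℝ) * ‖a‖ ^ 2 := by simp [Finset.sum_const, nsmul_eq_mul]

lemma abs_dotR_le {n : ℕ} (a b : Fin n → ℝ) : |dotR a b| ≤ (normSq a + normSq b) / 2 := by
  unfold dotR normSq
  calc |∑ j, a j * b j| ≤ ∑ j, |a j * b j| := Finset.abs_sum_le_sum_abs _ _
    _ ≤ ∑ j, (a j ^ 2 + b j ^ 2) / 2 := by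
        refine Finset.sum_le_sum fun j _ => ?_
        rw [abs_mul]
        nlinarith [abs_nonneg (a j), abs_nonneg (b j), sq_abs (a j), sq_abs (b j),
          sq_nonneg (|a j| - |b j|)]
    _ = (∑ j, a j ^ 2 + ∑ j, b j ^ 2) / 2 := by
        rw [← Finset.sum_add_distrib, Finset.sum_div]

lemma abs_gradDot_le {m n : ℕ} (u v : (Fin m → ℝ) → Fin n → ℝ) (x : Fin m → ℝ) :
    |gradDot u v x| ≤ (gradSq u x + gradSq v x) / 2 := by
  unfold gradSq gradDot
  calc |∑ i, ∑ j, fderiv ℝ u x (Pi.single i (1:ℝ)) j * fderiv ℝ v x (Pi.single i (1:ℝ)) j|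
      ≤ ∑ i, |∑ j, fderiv ℝ u x (Pi.single i (1:ℝ)) j * fderiv ℝ v x (Pi.single i (1:ℝ)) j| :=
        Finset.abs_sum_le_sum_abs _ _
    _ ≤ ∑ i, ((∑ j, fderiv ℝ u x (Pi.single i (1:ℝ)) j ^ 2)
          + ∑ j, fderiv ℝ v x (Pi.single i (1:ℝ)) j ^ 2) / 2 := by
        refine Finset.sum_le_sum fun i _ => ?_
        exact abs_dotR_le (fun j => fderiv ℝ u x (Pi.single i (1:ℝ)) j)
          (fun j => fderiv ℝ v x (Pi.single i (1:ℝ)) j)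
    _ = ((∑ i, ∑ j, fderiv ℝ u x (Pi.single i (1:ℝ)) j ^ 2)
          + ∑ i, ∑ j, fderiv ℝ v x (Pi.single i (1:ℝ)) j ^ 2) / 2 := by
        rw [← Finset.sum_add_distrib, Finset.sum_div]
    _ = _ := by simp [pow_two]

lemma normSq_add {n : ℕ} (a b : Fin n → ℝ) :
    normSq (a + b) = normSq a + 2 * dotR a b + normSq b := by
  unfold normSq dotR
  simp only [Pi.add_apply, Finset.mul_sum]
  rw [← Finset.sum_add_distrib, ← Finset.sum_add_distrib]
  exact Finset.sum_congr rfl fun j _ => by ring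

lemma contOn_fderiv_apply {m n : ℕ} {u : (Fin m → ℝ) → Fin n → ℝ} {Ω : Set (Fin m → ℝ)}
    (hΩ : IsOpen Ω) (hu : ContDiffOn ℝ 1 u Ω) (i : Fin m) (j : Fin n) :
    ContinuousOn (fun x => fderiv ℝ u x (Pi.single i (1:ℝ)) j) Ω := by
  have hdu : ContinuousOn (fderiv ℝ u) Ω := hu.continuousOn_fderiv_of_isOpen hΩ le_rfl
  exact ((continuous_apply j).comp
    (ContinuousLinearMap.apply ℝ (Fin n → ℝ) (Pi.single i (1:ℝ))).continuous).comp_continuousOn hdu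

lemma contOn_gradDot {m n : ℕ} {u v : (Fin m → ℝ) → Fin n → ℝ} {Ω : Set (Fin m → ℝ)}
    (hΩ : IsOpen Ω) (hu : ContDiffOn ℝ 1 u Ω) (hv : ContDiffOn ℝ 1 v Ω) :
    ContinuousOn (gradDot u v) Ω := by
  unfold gradDot
  refine continuousOn_finset_sum _ fun i _ => continuousOn_finset_sum _ fun j _ => ?_
  exact (contOn_fderiv_apply hΩ hu i j).mul (contOn_fderiv_apply hΩ hv i j)

lemma cont_normSq {n : ℕ} : Continuous (normSq : (Fin n → ℝ) → ℝ) := by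
  unfold normSq
  exact continuous_finset_sum _ fun j _ => (continuous_apply j).pow 2

lemma cont_dotR {n : ℕ} : Continuous (fun p : (Fin n → ℝ) × (Fin n → ℝ) => dotR p.1 p.2) := by
  unfold dotR
  exact continuous_finset_sum _ fun j _ =>
    ((continuous_apply j).comp continuous_fst).mul ((continuous_apply j).comp continuous_snd)

def Fint {m n : ℕ} (W : ℝ → ℝ) (ε : ℝ) (u v : (Fin m → ℝ) → Fin n → ℝ) (x : Fin m → ℝ) : ℝ :=
  gradSq v x / 2 - 1 / (2 * ε ^ 2) * Wd W (1 - normSq (u x)) * normSq (v x)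

def critInt {m n : ℕ} (W : ℝ → ℝ) (ε : ℝ) (u v : (Fin m → ℝ) → Fin n → ℝ) (x : Fin m → ℝ) : ℝ :=
  gradDot u v x - 1 / ε ^ 2 * Wd W (1 - normSq (u x)) * dotR (u x) (v x)

def gInt {m n : ℕ} (W : ℝ → ℝ) (ε : ℝ) (u v : (Fin m → ℝ) → Fin n → ℝ) (x : Fin m → ℝ) : ℝ :=
  (W (1 - normSq (u x + v x)) - W (1 - normSq (u x))
    - Wd W (1 - normSq (u x)) * ((1 - normSq (u x + v x)) - (1 - normSq (u x)))) / (2 * ε ^ 2)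

lemma gInt_nonneg {m n : ℕ} {W : ℝ → ℝ} (hW : ContDiffOn ℝ 1 W (Iic (1:ℝ)))
    (hWconv : StrictConvexOn ℝ (Iic (1:ℝ)) W) {ε : ℝ} (hε : 0 < ε)
    (u v : (Fin m → ℝ) → Fin n → ℝ) (x : Fin m → ℝ) : 0 ≤ gInt W ε u v x := by
  unfold gInt
  apply div_nonneg _ (by positivity)
  exact key_convex_le hW hWconv (by simp [normSq_nonneg]) (by simp [normSq_nonneg])

lemma gInt_eq_zero_iff {m n : ℕ} {W : ℝ → ℝ} (hW : ContDiffOn ℝ 1 W (Iic (1:ℝ)))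
    (hWconv : StrictConvexOn ℝ (Iic (1:ℝ)) W) {ε : ℝ} (hε : 0 < ε)
    (u v : (Fin m → ℝ) → Fin n → ℝ) (x : Fin m → ℝ) :
    gInt W ε u v x = 0 ↔ normSq (u x + v x) = normSq (u x) := by
  constructor
  · intro h0
    by_contra hne
    have hne' : (1 - normSq (u x + v x)) ≠ (1 - normSq (u x)) := fun hh => hne (by linarith)
    have hpos := key_convex hW hWconv (s := 1 - normSq (u x)) (t := 1 - normSq (u x + v x))
      (by simp [normSq_nonneg]) (by simp [normSq_nonneg]) hne'
    unfold gInt at h0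
    rw [div_eq_zero_iff] at h0
    rcases h0 with h0 | h0
    · linarith
    · nlinarith
  · intro h
    unfold gInt
    rw [h]
    ring

lemma pointwise_split {m n : ℕ} {Ω : Set (Fin m → ℝ)} (hΩo : IsOpen Ω)
    {W : ℝ → ℝ} {ε : ℝ} (hε : 0 < ε) {u v : (Fin m → ℝ) → Fin n → ℝ}
    (hu1 : ContDiffOn ℝ 1 u Ω) (hv1 : ContDiffOn ℝ 1 v Ω) {x} (hx : x ∈ Ω) :
    gradSq (u + v) x / 2 + W (1 - normSq ((u + v) x)) / (2 * ε ^ 2)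
      = (gradSq u x / 2 + W (1 - normSq (u x)) / (2 * ε ^ 2))
        + (Fint W ε u v x + critInt W ε u v x + gInt W ε u v x) := by
  have hdu : DifferentiableAt ℝ u x :=
    (hu1.differentiableOn one_ne_zero x hx).differentiableAt (hΩo.mem_nhds hx)
  have hdv : DifferentiableAt ℝ v x :=
    (hv1.differentiableOn one_ne_zero x hx).differentiableAt (hΩo.mem_nhds hx)
  have hD : fderiv ℝ (u + v) x = fderiv ℝ u x + fderiv ℝ v x := fderiv_add hdu hdv
  have hgs : gradSq (u + v) x = gradSq u x + 2 * gradDot u v x + gradSq v x := by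
    unfold gradSq gradDot
    rw [hD]
    simp only [ContinuousLinearMap.add_apply, Pi.add_apply]
    simp only [Finset.mul_sum]
    rw [← Finset.sum_add_distrib, ← Finset.sum_add_distrib]
    refine Finset.sum_congr rfl fun i _ => ?_
    rw [← Finset.sum_add_distrib, ← Finset.sum_add_distrib]
    exact Finset.sum_congr rfl fun j _ => by ring
  have hns : normSq (u x + v x) = normSq (u x) + 2 * dotR (u x) (v x) + normSq (v x) :=
    normSq_add _ _
  have hε2 : (ε:ℝ) ^ 2 ≠ 0 := pow_ne_zero 2 hε.ne'
  simp only [Pi.add_apply] at hgs ⊢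
  unfold Fint critInt gInt
  rw [hgs, hns]
  field_simp
  ring

lemma integrableOn_of_dominated' {m : ℕ} {Ω : Set (Fin m → ℝ)} (hΩm : MeasurableSet Ω)
    {f g : (Fin m → ℝ) → ℝ} (hf : ContinuousOn f Ω) (hg : IntegrableOn g Ω)
    (h : ∀ x ∈ Ω, |f x| ≤ g x) : IntegrableOn f Ω := by
  refine Integrable.mono' hg (hf.aestronglyMeasurable hΩm) ?_
  filter_upwards [ae_restrict_mem hΩm] with x hx
  simpa [Real.norm_eq_abs] using h x hx

lemma integrableOn_of_bound {m : ℕ} {Ω : Set (Fin m → ℝ)} (hΩm : MeasurableSet Ω)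
    (hfin : volume Ω < ⊤) {f : (Fin m → ℝ) → ℝ} (hf : ContinuousOn f Ω)
    {C : ℝ} (hC : ∀ x ∈ Ω, |f x| ≤ C) : IntegrableOn f Ω :=
  integrableOn_of_dominated' hΩm hf (integrableOn_const hfin.ne) hC

/-- Step 1 of the proof of Theorem 1.3: the energy difference at a
critical point is bounded below by the quadratic form `F`, with equality iff
`|u + v| = |u|` a.e. in `Ω`. -/
theorem statement_16 {m n : ℕ}
    (Ω : Set (Fin m → ℝ)) (hΩo : IsOpen Ω) (hΩc : IsConnected Ω) (hΩb : IsBounded Ω)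
    (W : ℝ → ℝ) (hW : ContDiffOn ℝ 1 W (Iic (1:ℝ))) (hW0 : W 0 = 0)
    (hWpos : ∀ t ∈ Iic (1:ℝ), t ≠ 0 → 0 < W t)
    (hWconv : StrictConvexOn ℝ (Iic (1:ℝ)) W)
    (ε : ℝ) (hε : 0 < ε)
    (ubd : (Fin m → ℝ) → Fin n → ℝ)
    (u : (Fin m → ℝ) → Fin n → ℝ)
    (huA : Admissible Ω ubd u) (huL : IsBounded (u '' Ω))
    (huC : IsCritical W ε Ω u) :
    ∀ v, H10 Ω v →
      ((∫ x in Ω, (gradSq v x / 2 - 1 / (2 * ε ^ 2) * Wd W (1 - normSq (u x)) * normSq (v x)))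
          ≤ GLenergy W ε Ω (u + v) - GLenergy W ε Ω u) ∧
      (GLenergy W ε Ω (u + v) - GLenergy W ε Ω u =
          (∫ x in Ω, (gradSq v x / 2 - 1 / (2 * ε ^ 2) * Wd W (1 - normSq (u x)) * normSq (v x)))
        ↔ ∀ᵐ x ∂(volume.restrict Ω), normSq (u x + v x) = normSq (u x)) := by
  intro v hv
  obtain ⟨hu1, -, hugi, huni, -⟩ := huA
  obtain ⟨hv1, hvc, hvgi, hvni, -⟩ := id hv
  have hΩm : MeasurableSet Ω := hΩo.measurableSet
  have hfin : volume Ω < ⊤ := hΩb.measure_lt_top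
  -- bounds on u and v
  obtain ⟨Cu, hCu⟩ := isBounded_iff_forall_norm_le.mp huL
  obtain ⟨Cv, hCv⟩ := hΩb.isCompact_closure.exists_bound_of_continuousOn hvc
  set B : ℝ := (n:ℝ) * (max Cu 0 + max Cv 0) ^ 2 with hBdef
  have hB0 : 0 ≤ B := by positivity
  have hBu : ∀ x ∈ Ω, normSq (u x) ≤ B := by
    intro x hx
    have h1 : ‖u x‖ ≤ max Cu 0 := le_trans (hCu _ (mem_image_of_mem u hx)) (le_max_left _ _)
    have h2 := normSq_le (u x)
    have h3 : (0:ℝ) ≤ ‖u x‖ := norm_nonneg _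
    have h4 : (0:ℝ) ≤ max Cv 0 := le_max_right _ _
    have h5 : (0:ℝ) ≤ (n:ℝ) := Nat.cast_nonneg n
    have h6 : ‖u x‖ ≤ max Cu 0 + max Cv 0 := h1.trans (le_add_of_nonneg_right h4)
    have h7 : ‖u x‖ ^ 2 ≤ (max Cu 0 + max Cv 0) ^ 2 := pow_le_pow_left₀ h3 h6 2
    rw [hBdef]
    exact h2.trans (mul_le_mul_of_nonneg_left h7 h5)
  have hBuv : ∀ x ∈ Ω, normSq (u x + v x) ≤ B := by
    intro x hx
    have h1 : ‖u x + v x‖ ≤ max Cu 0 + max Cv 0 := by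
      refine le_trans (norm_add_le _ _) (add_le_add ?_ ?_)
      · exact le_trans (hCu _ (mem_image_of_mem u hx)) (le_max_left _ _)
      · exact le_trans (hCv _ (subset_closure hx)) (le_max_left _ _)
    have h2 := normSq_le (u x + v x)
    have h3 : (0:ℝ) ≤ ‖u x + v x‖ := norm_nonneg _
    have h5 : (0:ℝ) ≤ (n:ℝ) := Nat.cast_nonneg n
    have h7 : ‖u x + v x‖ ^ 2 ≤ (max Cu 0 + max Cv 0) ^ 2 := pow_le_pow_left₀ h3 h1 2
    rw [hBdef]
    exact h2.trans (mul_le_mul_of_nonneg_left h7 h5)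
  have haI : ∀ y : Fin m → ℝ, (1 - normSq (u y)) ∈ Iic (1:ℝ) :=
    fun y => by simpa using sub_le_self (1:ℝ) (normSq_nonneg (u y))
  have hbI : ∀ y : Fin m → ℝ, (1 - normSq (u y + v y)) ∈ Iic (1:ℝ) :=
    fun y => by simpa using sub_le_self (1:ℝ) (normSq_nonneg (u y + v y))
  have haT : ∀ x ∈ Ω, (1 - normSq (u x)) ∈ Icc (1 - B) 1 :=
    fun x hx => ⟨by linarith [hBu x hx], haI x⟩
  have hbT : ∀ x ∈ Ω, (1 - normSq (u x + v x)) ∈ Icc (1 - B) 1 :=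
    fun x hx => ⟨by linarith [hBuv x hx], hbI x⟩
  -- bounds on W and Wd on the compact window
  have hWc : ContinuousOn W (Iic (1:ℝ)) := hW.continuousOn
  have hWdc : ContinuousOn (Wd W) (Iic (1:ℝ)) :=
    hW.continuousOn_derivWithin (uniqueDiffOn_Iic 1) le_rfl
  obtain ⟨MW, hMW⟩ := (isCompact_Icc (a := 1 - B) (b := 1)).exists_bound_of_continuousOn
    (hWc.mono Icc_subset_Iic_self)
  obtain ⟨MD, hMD⟩ := (isCompact_Icc (a := 1 - B) (b := 1)).exists_bound_of_continuousOn
    (hWdc.mono Icc_subset_Iic_self)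
  have hMD0 : 0 ≤ MD := le_trans (norm_nonneg _) (hMD 1 ⟨by linarith, le_rfl⟩)
  have hWaB : ∀ x ∈ Ω, |W (1 - normSq (u x))| ≤ MW := fun x hx => by
    have := hMW _ (haT x hx); rwa [Real.norm_eq_abs] at this
  have hWbB : ∀ x ∈ Ω, |W (1 - normSq (u x + v x))| ≤ MW := fun x hx => by
    have := hMW _ (hbT x hx); rwa [Real.norm_eq_abs] at this
  have hWda : ∀ x ∈ Ω, |Wd W (1 - normSq (u x))| ≤ MD := fun x hx => by
    have := hMD _ (haT x hx); rwa [Real.norm_eq_abs] at this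
  -- continuity on Ω
  have hcu : ContinuousOn u Ω := hu1.continuousOn
  have hcv : ContinuousOn v Ω := hv1.continuousOn
  have hca : ContinuousOn (fun x => 1 - normSq (u x)) Ω :=
    continuousOn_const.sub (cont_normSq.comp_continuousOn hcu)
  have hcb : ContinuousOn (fun x => 1 - normSq (u x + v x)) Ω :=
    continuousOn_const.sub (cont_normSq.comp_continuousOn (hcu.add hcv))
  have hcWa : ContinuousOn (fun x => W (1 - normSq (u x))) Ω :=
    hWc.comp hca fun x _ => haI x
  have hcWb : ContinuousOn (fun x => W (1 - normSq (u x + v x))) Ω :=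
    hWc.comp hcb fun x _ => hbI x
  have hcWda : ContinuousOn (fun x => Wd W (1 - normSq (u x))) Ω :=
    hWdc.comp hca fun x _ => haI x
  have hcnsu : ContinuousOn (fun x => normSq (u x)) Ω := cont_normSq.comp_continuousOn hcu
  have hcnsv : ContinuousOn (fun x => normSq (v x)) Ω := cont_normSq.comp_continuousOn hcv
  have hcdot : ContinuousOn (fun x => dotR (u x) (v x)) Ω :=
    cont_dotR.comp_continuousOn (hcu.prodMk hcv)
  have hcgd : ContinuousOn (gradDot u v) Ω := contOn_gradDot hΩo hu1 hv1
  have hcgv : ContinuousOn (gradSq v) Ω := contOn_gradDot hΩo hv1 hv1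
  -- integrability
  have iWa : IntegrableOn (fun x => W (1 - normSq (u x))) Ω :=
    integrableOn_of_bound hΩm hfin hcWa hWaB
  have iu : IntegrableOn (fun x => gradSq u x / 2 + W (1 - normSq (u x)) / (2 * ε ^ 2)) Ω :=
    (hugi.div_const 2).add (iWa.div_const (2 * ε ^ 2))
  have iF : IntegrableOn (fun x => Fint W ε u v x) Ω := by
    have h2 : IntegrableOn (fun x => 1 / (2 * ε ^ 2) * Wd W (1 - normSq (u x)) * normSq (v x)) Ω := by
      refine integrableOn_of_dominated' hΩm ((continuousOn_const.mul hcWda).mul hcnsv)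
        (hvni.const_mul (1 / (2 * ε ^ 2) * MD)) ?_
      intro x hx
      have h0 := normSq_nonneg (v x)
      have h1 := hWda x hx
      have hpos : (0:ℝ) < 1 / (2 * ε ^ 2) := by positivity
      rw [abs_mul, abs_mul, abs_of_nonneg hpos.le, abs_of_nonneg h0]
      exact mul_le_mul_of_nonneg_right (mul_le_mul_of_nonneg_left h1 hpos.le) h0
    unfold Fint
    exact (hvgi.div_const 2).sub h2
  have icrit : IntegrableOn (fun x => critInt W ε u v x) Ω := by
    have iguv : IntegrableOn (fun x => (gradSq u x + gradSq v x) / 2) Ω :=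
      (hugi.add hvgi).div_const 2
    have h1 : IntegrableOn (gradDot u v) Ω :=
      integrableOn_of_dominated' hΩm hcgd iguv (fun x _ => abs_gradDot_le u v x)
    have insum : IntegrableOn
        (fun x => 1 / ε ^ 2 * MD * ((normSq (u x) + normSq (v x)) / 2)) Ω :=
      ((huni.add hvni).div_const 2).const_mul _
    have h2 : IntegrableOn (fun x => 1 / ε ^ 2 * Wd W (1 - normSq (u x)) * dotR (u x) (v x)) Ω := by
      refine integrableOn_of_dominated' hΩm ((continuousOn_const.mul hcWda).mul hcdot) insum ?_
      intro x hx
      have h1' := hWda x hx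
      have h3 := abs_dotR_le (u x) (v x)
      have h7 := abs_nonneg (dotR (u x) (v x))
      have hpos : (0:ℝ) < 1 / ε ^ 2 := by positivity
      calc |1 / ε ^ 2 * Wd W (1 - normSq (u x)) * dotR (u x) (v x)|
          = 1 / ε ^ 2 * (|Wd W (1 - normSq (u x))| * |dotR (u x) (v x)|) := by
            rw [abs_mul, abs_mul, abs_of_nonneg hpos.le]; ring
        _ ≤ 1 / ε ^ 2 * (MD * ((normSq (u x) + normSq (v x)) / 2)) :=
            mul_le_mul_of_nonneg_left (mul_le_mul h1' h3 h7 hMD0) hpos.le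
        _ = 1 / ε ^ 2 * MD * ((normSq (u x) + normSq (v x)) / 2) := by ring
    unfold critInt
    exact h1.sub h2
  have ig : IntegrableOn (fun x => gInt W ε u v x) Ω := by
    have hcont : ContinuousOn (fun x => gInt W ε u v x) Ω := by
      unfold gInt
      exact ((hcWb.sub hcWa).sub (hcWda.mul (hcb.sub hca))).div_const (2 * ε ^ 2)
    refine integrableOn_of_bound hΩm hfin hcont (C := (2 * MW + MD * (2 * B)) / (2 * ε ^ 2)) ?_
    intro x hx
    have h1 := hWaB x hx
    have h2 := hWbB x hx
    have h3 := hWda x hx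
    have h4 : |(1 - normSq (u x + v x)) - (1 - normSq (u x))| ≤ 2 * B := by
      have := hBu x hx
      have := hBuv x hx
      have := normSq_nonneg (u x)
      have := normSq_nonneg (u x + v x)
      rw [abs_le]; constructor <;> linarith
    have hnum : |W (1 - normSq (u x + v x)) - W (1 - normSq (u x))
        - Wd W (1 - normSq (u x)) * ((1 - normSq (u x + v x)) - (1 - normSq (u x)))|
        ≤ 2 * MW + MD * (2 * B) := by
      have htri : |W (1 - normSq (u x + v x)) - W (1 - normSq (u x))
          - Wd W (1 - normSq (u x)) * ((1 - normSq (u x + v x)) - (1 - normSq (u x)))|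
          ≤ |W (1 - normSq (u x + v x))| + |W (1 - normSq (u x))|
            + |Wd W (1 - normSq (u x)) * ((1 - normSq (u x + v x)) - (1 - normSq (u x)))| := by
        have he : W (1 - normSq (u x + v x)) - W (1 - normSq (u x))
            - Wd W (1 - normSq (u x)) * ((1 - normSq (u x + v x)) - (1 - normSq (u x)))
            = W (1 - normSq (u x + v x)) + -(W (1 - normSq (u x)))
              + -(Wd W (1 - normSq (u x)) * ((1 - normSq (u x + v x)) - (1 - normSq (u x)))) := by
          ring
        rw [he]
        refine le_trans (abs_add_le _ _) ?_
        refine le_trans (add_le_add_left (abs_add_le _ _) _) ?_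
        rw [abs_neg, abs_neg]
      have hR : |Wd W (1 - normSq (u x)) * ((1 - normSq (u x + v x)) - (1 - normSq (u x)))|
          ≤ MD * (2 * B) := by
        rw [abs_mul]
        exact mul_le_mul h3 h4 (abs_nonneg _) hMD0
      linarith
    unfold gInt
    rw [abs_div, abs_of_nonneg (by positivity : (0:ℝ) ≤ 2 * ε ^ 2)]
    gcongr

  -- main splitting of the energy
  have hEuv : GLenergy W ε Ω (u + v)
      = (∫ x in Ω, (gradSq u x / 2 + W (1 - normSq (u x)) / (2 * ε ^ 2)))
        + (((∫ x in Ω, Fint W ε u v x) + (∫ x in Ω, critInt W ε u v x))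
          + ∫ x in Ω, gInt W ε u v x) := by
    unfold GLenergy
    rw [setIntegral_congr_fun hΩm (fun x hx => pointwise_split hΩo hε hu1 hv1 hx)]
    have iFc : IntegrableOn (fun x => Fint W ε u v x + critInt W ε u v x) Ω := iF.add icrit
    have iFcg : IntegrableOn
        (fun x => Fint W ε u v x + critInt W ε u v x + gInt W ε u v x) Ω := iFc.add ig
    rw [integral_add iu iFcg, integral_add iFc ig, integral_add iF icrit]
  have hc0 : (∫ x in Ω, critInt W ε u v x) = 0 := by
    have h := huC v hv
    unfold critInt
    exact h
  have hdiff : GLenergy W ε Ω (u + v) - GLenergy W ε Ω u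
      = (∫ x in Ω, Fint W ε u v x) + ∫ x in Ω, gInt W ε u v x := by
    have hEu : GLenergy W ε Ω u
        = ∫ x in Ω, (gradSq u x / 2 + W (1 - normSq (u x)) / (2 * ε ^ 2)) := rfl
    rw [hEuv, hEu, hc0]; ring
  have hFeq : (∫ x in Ω, (gradSq v x / 2
        - 1 / (2 * ε ^ 2) * Wd W (1 - normSq (u x)) * normSq (v x)))
      = ∫ x in Ω, Fint W ε u v x := rfl
  have hgnn : 0 ≤ ∫ x in Ω, gInt W ε u v x :=
    setIntegral_nonneg hΩm fun x _ => gInt_nonneg hW hWconv hε u v x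
  constructor
  · rw [hFeq, hdiff]; linarith
  · rw [hFeq, hdiff, add_eq_left]
    rw [integral_eq_zero_iff_of_nonneg_ae
      (Filter.Eventually.of_forall fun x => gInt_nonneg hW hWconv hε u v x) ig]
    constructor
    · intro h
      filter_upwards [h] with x hx
      exact (gInt_eq_zero_iff hW hWconv hε u v x).1 (by simpa using hx)
    · intro h
      filter_upwards [h] with x hx
      simpa using (gInt_eq_zero_iff hW hWconv hε u v x).2 hx
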